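/- Let C₁, C₂ > 0, A > 0, β > 0 and C_(T) > 0 with A² > (1 + β^{−1}) C₂. Set T_n = C_(T) n^{1+β}, a_n = A/√(log(T_n+e)) and ρ_a = e^{−C₂/a²}. Then for every C′_(T) ∈ (0, C_(T)) there exist a constant C > 0 and an integer n₀ such that for all n ≥ n₀: e^{C₁/a_{n+1}²} · e^{−ρ_{a_{n+1}} (T_{n+1} − T_n)} ≤ C · n^{(β+1) C₁/A²} · exp( −(C′_(T))^{1 − C₂/A²} (β+1) n^{β − (β+1) C₂/A²} ). In particular, since β − (β+1)C₂/A² > 0, this quantity tends to 0 faster than any power of n. -/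

import Mathlib

open Filter

/-- `n^r * exp(-c n^s) → 0` for `c, s > 0`. -/
private lemma rpow_exp_decay (r c s : ℝ) (hc : 0 < c) (hs : 0 < s) :
    Tendsto (fun n : ℕ => (n : ℝ) ^ r * Real.exp (-c * (n : ℝ) ^ s)) atTop (nhds 0) := by
  have hbase := tendsto_rpow_mul_exp_neg_mul_atTop_nhds_zero (r / s) c hc
  have hcomp : Tendsto (fun n : ℕ => (n : ℝ) ^ s) atTop atTop :=
    (tendsto_rpow_atTop hs).comp tendsto_natCast_atTop_atTop
  refine (hbase.comp hcomp).congr' ?_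
  filter_upwards [eventually_ge_atTop 1] with n hn
  have hN0 : (0 : ℝ) < (n : ℝ) := by exact_mod_cast Nat.lt_of_lt_of_le Nat.zero_lt_one hn
  simp only [Function.comp_apply]
  congr 1
  rw [← Real.rpow_mul hN0.le]
  congr 1
  field_simp

/-- The pointwise estimate, valid whenever `N ≥ 1` and
`CT (N+1)^{1+β} + e ≤ D N^{1+β}` with `D^{C₂/A²} = CT · CT'^{C₂/A² − 1}`. -/
private lemma mu_pointwise_bound (C₁ C₂ A β CT CT' D : ℝ) (hC₁ : 0 < C₁) (hC₂ : 0 < C₂)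
    (hA : 0 < A) (hβ : 0 < β) (hCT'0 : 0 < CT') (hCT' : CT' < CT)
    (hD0 : 0 < D) (hDp : D ^ (C₂ / A ^ 2) = CT * CT' ^ (C₂ / A ^ 2 - 1))
    (N : ℝ) (hN : 1 ≤ N)
    (hXD : CT * (N + 1) ^ (1 + β) + Real.exp 1 ≤ D * N ^ (1 + β)) :
    Real.exp (C₁ / (A / Real.sqrt (Real.log (CT * (N + 1) ^ (1 + β) + Real.exp 1))) ^ 2)
        * Real.exp (-(Real.exp (-(C₂ / (A / Real.sqrt
            (Real.log (CT * (N + 1) ^ (1 + β) + Real.exp 1))) ^ 2)))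
          * (CT * (N + 1) ^ (1 + β) - CT * N ^ (1 + β)))
      ≤ D ^ (C₁ / A ^ 2) * N ^ ((β + 1) * C₁ / A ^ 2)
        * Real.exp (-(CT' ^ (1 - C₂ / A ^ 2)) * (β + 1)
            * N ^ (β - (β + 1) * C₂ / A ^ 2)) := by
  have hCT : 0 < CT := hCT'0.trans hCT'
  have hA2 : (0 : ℝ) < A ^ 2 := by positivity
  have hN0 : (0 : ℝ) < N := lt_of_lt_of_le one_pos hN
  set X : ℝ := CT * (N + 1) ^ (1 + β) + Real.exp 1 with hXdef
  have hX1 : (1 : ℝ) < X := by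
    have he : (1 : ℝ) < Real.exp 1 := by
      have := Real.exp_one_gt_d9; linarith
    have : 0 < CT * (N + 1) ^ (1 + β) := by positivity
    simp only [hXdef]; linarith
  have hX0 : (0 : ℝ) < X := lt_trans one_pos hX1
  have hL : 0 < Real.log X := Real.log_pos hX1
  -- rewrite the two exponentials as rpow's of X
  have e1 : Real.exp (C₁ / (A / Real.sqrt (Real.log X)) ^ 2) = X ^ (C₁ / A ^ 2) := by
    rw [show C₁ / (A / Real.sqrt (Real.log X)) ^ 2 = Real.log X * (C₁ / A ^ 2) by
      rw [div_pow, Real.sq_sqrt hL.le, div_div_eq_mul_div]; field_simp,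
      ← Real.rpow_def_of_pos hX0]
  have e2 : Real.exp (-(C₂ / (A / Real.sqrt (Real.log X)) ^ 2)) = X ^ (-(C₂ / A ^ 2)) := by
    rw [show -(C₂ / (A / Real.sqrt (Real.log X)) ^ 2) = Real.log X * (-(C₂ / A ^ 2)) by
      rw [div_pow, Real.sq_sqrt hL.le, div_div_eq_mul_div]; field_simp,
      ← Real.rpow_def_of_pos hX0]
  rw [e1, e2]
  -- bound the first factor
  have hNp : (0 : ℝ) < N ^ (1 + β) := Real.rpow_pos_of_pos hN0 _
  have hleft : X ^ (C₁ / A ^ 2) ≤ D ^ (C₁ / A ^ 2) * N ^ ((β + 1) * C₁ / A ^ 2) := by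
    calc X ^ (C₁ / A ^ 2) ≤ (D * N ^ (1 + β)) ^ (C₁ / A ^ 2) :=
          Real.rpow_le_rpow hX0.le hXD (by positivity)
      _ = D ^ (C₁ / A ^ 2) * N ^ ((β + 1) * C₁ / A ^ 2) := by
          rw [Real.mul_rpow hD0.le hNp.le, ← Real.rpow_mul hN0.le]
          congr 1
          ring
  -- bound the gap from below
  have hgap : CT * ((1 + β) * N ^ β) ≤ CT * (N + 1) ^ (1 + β) - CT * N ^ (1 + β) := by
    have hb : 1 + (1 + β) * (1 / N) ≤ (1 + 1 / N) ^ (1 + β) :=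
      one_add_mul_self_le_rpow_one_add (le_trans (by norm_num : (-1:ℝ) ≤ 0) (by positivity))
        (by linarith)
    have hmul : (N + 1) ^ (1 + β) = N ^ (1 + β) * (1 + 1 / N) ^ (1 + β) := by
      rw [← Real.mul_rpow hN0.le (by positivity)]
      congr 1
      field_simp
    have hdiv : N ^ (1 + β) = N * N ^ β := by
      rw [Real.rpow_add hN0, Real.rpow_one]
    rw [hmul, hdiv]
    have hkey : CT * (N * N ^ β) * (1 + (1 + β) * (1 / N))
        = CT * (N * N ^ β) + CT * ((1 + β) * N ^ β) := by
      field_simp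
    nlinarith [mul_le_mul_of_nonneg_left hb (by positivity : (0:ℝ) ≤ CT * (N * N ^ β)), hkey]
  -- bound X^p from above
  have hXp : X ^ (C₂ / A ^ 2) ≤ D ^ (C₂ / A ^ 2) * N ^ ((1 + β) * (C₂ / A ^ 2)) := by
    calc X ^ (C₂ / A ^ 2) ≤ (D * N ^ (1 + β)) ^ (C₂ / A ^ 2) :=
          Real.rpow_le_rpow hX0.le hXD (by positivity)
      _ = D ^ (C₂ / A ^ 2) * N ^ ((1 + β) * (C₂ / A ^ 2)) := by
          rw [Real.mul_rpow hD0.le hNp.le, ← Real.rpow_mul hN0.le]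
  have hXppos : 0 < X ^ (C₂ / A ^ 2) := Real.rpow_pos_of_pos hX0 _
  have hDppos : 0 < D ^ (C₂ / A ^ 2) := Real.rpow_pos_of_pos hD0 _
  have hNppos : 0 < N ^ ((1 + β) * (C₂ / A ^ 2)) := Real.rpow_pos_of_pos hN0 _
  -- bound the second factor
  have hright : Real.exp (-(X ^ (-(C₂ / A ^ 2))) * (CT * (N + 1) ^ (1 + β) - CT * N ^ (1 + β)))
      ≤ Real.exp (-(CT' ^ (1 - C₂ / A ^ 2)) * (β + 1) * N ^ (β - (β + 1) * C₂ / A ^ 2)) := by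
    rw [Real.exp_le_exp]
    simp only [neg_mul, neg_le_neg_iff]
    have h1 : N ^ β / N ^ ((1 + β) * (C₂ / A ^ 2)) = N ^ (β - (β + 1) * C₂ / A ^ 2) := by
      rw [← Real.rpow_sub hN0]
      congr 1
      ring
    have h2 : CT / D ^ (C₂ / A ^ 2) = CT' ^ (1 - C₂ / A ^ 2) := by
      rw [div_eq_iff hDppos.ne', hDp]
      symm
      calc CT' ^ (1 - C₂ / A ^ 2) * (CT * CT' ^ (C₂ / A ^ 2 - 1))
          = CT * (CT' ^ (1 - C₂ / A ^ 2) * CT' ^ (C₂ / A ^ 2 - 1)) := by ring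
        _ = CT * CT' ^ ((1 - C₂ / A ^ 2) + (C₂ / A ^ 2 - 1)) := by
            rw [← Real.rpow_add hCT'0]
        _ = CT := by norm_num
    calc CT' ^ (1 - C₂ / A ^ 2) * (β + 1) * N ^ (β - (β + 1) * C₂ / A ^ 2)
        = (D ^ (C₂ / A ^ 2) * N ^ ((1 + β) * (C₂ / A ^ 2)))⁻¹ * (CT * ((1 + β) * N ^ β)) := by
          rw [← h2, ← h1]
          field_simp
          ring
      _ ≤ (X ^ (C₂ / A ^ 2))⁻¹ * (CT * (N + 1) ^ (1 + β) - CT * N ^ (1 + β)) := by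
          apply mul_le_mul (inv_anti₀ hXppos hXp) hgap (by positivity) (by positivity)
      _ = X ^ (-(C₂ / A ^ 2)) * (CT * (N + 1) ^ (1 + β) - CT * N ^ (1 + β)) := by
          rw [Real.rpow_neg hX0.le]
  calc X ^ (C₁ / A ^ 2) * Real.exp (-(X ^ (-(C₂ / A ^ 2)))
        * (CT * (N + 1) ^ (1 + β) - CT * N ^ (1 + β)))
      ≤ (D ^ (C₁ / A ^ 2) * N ^ ((β + 1) * C₁ / A ^ 2))
        * Real.exp (-(CT' ^ (1 - C₂ / A ^ 2)) * (β + 1) * N ^ (β - (β + 1) * C₂ / A ^ 2)) :=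
        mul_le_mul hleft hright (Real.exp_pos _).le (by positivity)
    _ = _ := by ring

/-- The eventual bound on the plateau error factor. -/
private lemma mu_eventual_bound (C₁ C₂ A β CT CT' : ℝ) (hC₁ : 0 < C₁) (hC₂ : 0 < C₂)
    (hA : 0 < A) (hβ : 0 < β) (hCT'0 : 0 < CT') (hCT' : CT' < CT) (hpa : C₂ < A ^ 2) :
    ∃ C : ℝ, 0 < C ∧ ∀ᶠ n : ℕ in atTop,
      Real.exp (C₁ / (A / Real.sqrt (Real.log (CT * ((n : ℝ) + 1) ^ (1 + β) + Real.exp 1))) ^ 2)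
          * Real.exp (-(Real.exp (-(C₂ / (A / Real.sqrt
              (Real.log (CT * ((n : ℝ) + 1) ^ (1 + β) + Real.exp 1))) ^ 2)))
            * (CT * ((n : ℝ) + 1) ^ (1 + β) - CT * (n : ℝ) ^ (1 + β)))
        ≤ C * (n : ℝ) ^ ((β + 1) * C₁ / A ^ 2)
          * Real.exp (-(CT' ^ (1 - C₂ / A ^ 2)) * (β + 1)
              * (n : ℝ) ^ (β - (β + 1) * C₂ / A ^ 2)) := by
  have hCT : 0 < CT := hCT'0.trans hCT'
  have hA2 : (0 : ℝ) < A ^ 2 := by positivity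
  have hp0 : 0 < C₂ / A ^ 2 := by positivity
  have hp1 : C₂ / A ^ 2 < 1 := (div_lt_one hA2).mpr hpa
  -- the constant D
  obtain ⟨D, hDdef⟩ : ∃ D : ℝ, D = (CT * CT' ^ (C₂ / A ^ 2 - 1)) ^ (C₂ / A ^ 2)⁻¹ := ⟨_, rfl⟩
  have hD0 : 0 < D := hDdef ▸ Real.rpow_pos_of_pos (by positivity) _
  have hDp : D ^ (C₂ / A ^ 2) = CT * CT' ^ (C₂ / A ^ 2 - 1) := by
    rw [hDdef, ← Real.rpow_mul (by positivity), inv_mul_cancel₀ hp0.ne', Real.rpow_one]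
  have hCTp : CT ^ (C₂ / A ^ 2) = CT * CT ^ (C₂ / A ^ 2 - 1) := by
    nth_rewrite 2 [show CT = CT ^ (1:ℝ) from (Real.rpow_one CT).symm]
    rw [← Real.rpow_add hCT]
    ring_nf
  have hCTD : CT < D := by
    by_contra hle
    push_neg at hle
    have h1 : D ^ (C₂ / A ^ 2) ≤ CT ^ (C₂ / A ^ 2) := Real.rpow_le_rpow hD0.le hle hp0.le
    have h2 : CT ^ (C₂ / A ^ 2 - 1) < CT' ^ (C₂ / A ^ 2 - 1) :=
      Real.rpow_lt_rpow_of_neg hCT'0 hCT' (by linarith : C₂ / A ^ 2 - 1 < 0)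
    nlinarith [hDp, Real.rpow_pos_of_pos hCT (C₂ / A ^ 2 - 1)]
  -- X n / n^(1+β) tends to CT
  have h1β : (0 : ℝ) < 1 + β := by linarith
  have htend : Tendsto
      (fun n : ℕ => (CT * ((n : ℝ) + 1) ^ (1 + β) + Real.exp 1) / (n : ℝ) ^ (1 + β))
      atTop (nhds CT) := by
    have hq : Tendsto (fun n : ℕ => 1 + 1 / (n : ℝ)) atTop (nhds 1) := by
      simpa using (tendsto_const_nhds : Tendsto (fun _ : ℕ => (1:ℝ)) atTop (nhds 1)).add tendsto_one_div_atTop_nhds_zero_nat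
    have hq2 : Tendsto (fun n : ℕ => (1 + 1 / (n : ℝ)) ^ (1 + β)) atTop (nhds 1) := by
      simpa using hq.rpow_const (Or.inr h1β.le)
    have hpowtop : Tendsto (fun n : ℕ => (n : ℝ) ^ (1 + β)) atTop atTop :=
      (tendsto_rpow_atTop h1β).comp tendsto_natCast_atTop_atTop
    have h3 : Tendsto (fun n : ℕ => Real.exp 1 / (n : ℝ) ^ (1 + β)) atTop (nhds 0) :=
      tendsto_const_nhds.div_atTop hpowtop
    have hsum : Tendsto (fun n : ℕ => CT * (1 + 1 / (n : ℝ)) ^ (1 + β)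
        + Real.exp 1 / (n : ℝ) ^ (1 + β)) atTop (nhds CT) := by
      simpa using (hq2.const_mul CT).add h3
    refine hsum.congr' ?_
    filter_upwards [eventually_ge_atTop 1] with n hn
    have hN0 : (0 : ℝ) < (n : ℝ) := by exact_mod_cast hn
    have hNp : (0 : ℝ) < (n : ℝ) ^ (1 + β) := Real.rpow_pos_of_pos hN0 _
    have h4 : ((n : ℝ) + 1) ^ (1 + β) = (n : ℝ) ^ (1 + β) * (1 + 1 / (n : ℝ)) ^ (1 + β) := by
      rw [← Real.mul_rpow hN0.le (by positivity)]
      congr 1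
      field_simp
    rw [h4]
    field_simp
  refine ⟨D ^ (C₁ / A ^ 2), Real.rpow_pos_of_pos hD0 _, ?_⟩
  have hE2 : ∀ᶠ n : ℕ in atTop,
      CT * ((n : ℝ) + 1) ^ (1 + β) + Real.exp 1 ≤ D * (n : ℝ) ^ (1 + β) := by
    filter_upwards [htend.eventually_lt_const hCTD, eventually_ge_atTop 1] with n h1 h2
    have hN0 : (0 : ℝ) < (n : ℝ) := by exact_mod_cast h2
    have := (div_lt_iff₀ (Real.rpow_pos_of_pos hN0 (1 + β))).mp h1
    linarith
  filter_upwards [hE2, eventually_ge_atTop 1] with n hXD hn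
  exact mu_pointwise_bound C₁ C₂ A β CT CT' D hC₁ hC₂ hA hβ hCT'0 hCT' hD0 hDp
    (n : ℝ) (by exact_mod_cast hn) hXD

/-- Decay of the plateau error factor `μ_{n+1} = e^{C₁/a_{n+1}²} e^{−ρ_{a_{n+1}}(T_{n+1}−T_n)}`,
where `T_n = C_T n^{1+β}`, `a_n = A/√(log(T_n+e))` and `ρ_a = e^{−C₂/a²}`, under the condition
`A² > (1+β⁻¹)C₂`; in particular it tends to `0` faster than any power of `n`. -/
theorem plateau_error_factor_decay (C₁ C₂ A β CT : ℝ) (hC₁ : 0 < C₁) (hC₂ : 0 < C₂)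
    (hA : 0 < A) (hβ : 0 < β) (hCT : 0 < CT) (hAC : (1 + β⁻¹) * C₂ < A ^ 2) :
    0 < β - (β + 1) * C₂ / A ^ 2 ∧
    (∀ CT' : ℝ, CT' ∈ Set.Ioo 0 CT → ∃ C : ℝ, 0 < C ∧ ∃ n₀ : ℕ, ∀ n : ℕ, n₀ ≤ n →
      Real.exp (C₁ / (A / Real.sqrt (Real.log (CT * ((n : ℝ) + 1) ^ (1 + β) + Real.exp 1))) ^ 2)
          * Real.exp (-(Real.exp (-(C₂ / (A / Real.sqrt
              (Real.log (CT * ((n : ℝ) + 1) ^ (1 + β) + Real.exp 1))) ^ 2)))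
            * (CT * ((n : ℝ) + 1) ^ (1 + β) - CT * (n : ℝ) ^ (1 + β)))
        ≤ C * (n : ℝ) ^ ((β + 1) * C₁ / A ^ 2)
          * Real.exp (-(CT' ^ (1 - C₂ / A ^ 2)) * (β + 1)
              * (n : ℝ) ^ (β - (β + 1) * C₂ / A ^ 2))) ∧
    ∀ q : ℝ, Tendsto (fun n : ℕ => (n : ℝ) ^ q
        * (Real.exp (C₁ / (A / Real.sqrt (Real.log (CT * ((n : ℝ) + 1) ^ (1 + β)
              + Real.exp 1))) ^ 2)
          * Real.exp (-(Real.exp (-(C₂ / (A / Real.sqrt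
              (Real.log (CT * ((n : ℝ) + 1) ^ (1 + β) + Real.exp 1))) ^ 2)))
            * (CT * ((n : ℝ) + 1) ^ (1 + β) - CT * (n : ℝ) ^ (1 + β)))))
      atTop (nhds 0) := by
  have hA2 : (0 : ℝ) < A ^ 2 := by positivity
  have hpa : C₂ < A ^ 2 := by nlinarith [mul_pos (inv_pos.mpr hβ) hC₂]
  have hexp : (1 + β⁻¹) * C₂ * β = (β + 1) * C₂ := by
    field_simp
  have hs : 0 < β - (β + 1) * C₂ / A ^ 2 := by
    rw [sub_pos, div_lt_iff₀ hA2]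
    nlinarith [mul_lt_mul_of_pos_right hAC hβ, hexp]
  refine ⟨hs, ?_, ?_⟩
  · intro CT' hmem
    obtain ⟨C, hC0, hev⟩ := mu_eventual_bound C₁ C₂ A β CT CT' hC₁ hC₂ hA hβ hmem.1 hmem.2 hpa
    rw [Filter.eventually_atTop] at hev
    obtain ⟨n₀, hn₀⟩ := hev
    exact ⟨C, hC0, n₀, hn₀⟩
  · intro q
    obtain ⟨C, hC0, hev⟩ := mu_eventual_bound C₁ C₂ A β CT (CT / 2) hC₁ hC₂ hA hβ
      (half_pos hCT) (half_lt_self hCT) hpa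
    have ha0 : 0 < (CT / 2) ^ (1 - C₂ / A ^ 2) := Real.rpow_pos_of_pos (half_pos hCT) _
    have hc0 : 0 < (CT / 2) ^ (1 - C₂ / A ^ 2) * (β + 1) := by positivity
    have hbound := rpow_exp_decay (q + (β + 1) * C₁ / A ^ 2)
      ((CT / 2) ^ (1 - C₂ / A ^ 2) * (β + 1)) (β - (β + 1) * C₂ / A ^ 2) hc0 hs
    have hgoal0 : Tendsto (fun n : ℕ => C * ((n : ℝ) ^ (q + (β + 1) * C₁ / A ^ 2)
        * Real.exp (-((CT / 2) ^ (1 - C₂ / A ^ 2) * (β + 1))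
          * (n : ℝ) ^ (β - (β + 1) * C₂ / A ^ 2)))) atTop (nhds 0) := by
      simpa using hbound.const_mul C
    refine squeeze_zero' ?_ ?_ hgoal0
    · filter_upwards with n
      positivity
    · filter_upwards [hev, eventually_ge_atTop 1] with n h1 h2
      have hN0 : (0 : ℝ) < (n : ℝ) := by exact_mod_cast h2
      have hq0 : (0 : ℝ) ≤ (n : ℝ) ^ q := Real.rpow_nonneg hN0.le q
      calc (n : ℝ) ^ q * _ ≤ (n : ℝ) ^ q * (C * (n : ℝ) ^ ((β + 1) * C₁ / A ^ 2)
            * Real.exp (-((CT / 2) ^ (1 - C₂ / A ^ 2)) * (β + 1)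
              * (n : ℝ) ^ (β - (β + 1) * C₂ / A ^ 2))) := mul_le_mul_of_nonneg_left h1 hq0
        _ = C * ((n : ℝ) ^ (q + (β + 1) * C₁ / A ^ 2)
            * Real.exp (-((CT / 2) ^ (1 - C₂ / A ^ 2) * (β + 1))
              * (n : ℝ) ^ (β - (β + 1) * C₂ / A ^ 2))) := by
            rw [Real.rpow_add hN0]
            ring_nf
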